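/- Fix N ≥ 1 and work in MonoidAlgebra ℚ (FreeMonoid (Fin N)). For any two packed words u and v, the product satisfies M_u * M_v = Σ_w M_w, where the sum ranges over all packed words w of length |u| + |v| such that the prefix of w of length |u| packs to u and the suffix of w of length |v| packs to v. In particular the linear span of the M_u is a subalgebra (the algebra NCQSym of noncommutative quasi-symmetric-type monomial functions). -/

import Mathlib

/-- The rank of the letter `x` in the word `w`: one plus the number of distinct letters
of `w` smaller than `x`. -/
def rank (w : List ℕ) (x : ℕ) : ℕ := ((w.filter (· < x)).dedup).length + 1

/-- The packed word of a word `w`: if the distinct letters occurring in `w` are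
`b₁ < b₂ < … < b_k`, each occurrence of `b_j` is replaced by `j`. -/
def pack (w : List ℕ) : List ℕ := w.map (rank w)

lemma rank_eq (w : List ℕ) (x : ℕ) :
    rank w x = (w.toFinset.filter (· < x)).card + 1 := by
  rw [rank, ← List.card_toFinset, List.toFinset_filter]
  congr 1
  apply Finset.card_nbij id <;> simp [Set.MapsTo, Set.InjOn, Set.SurjOn, Set.subset_def]

lemma rank_lt_rank (w : List ℕ) {a b : ℕ} (ha : a ∈ w) :
    a < b ↔ rank w a < rank w b := by
  rw [rank_eq, rank_eq]
  constructor
  · intro hab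
    have hss : w.toFinset.filter (· < a) ⊂ w.toFinset.filter (· < b) := by
      refine ⟨Finset.monotone_filter_right _ (fun x _ hx => lt_trans hx hab), fun hsub => ?_⟩
      have h1 : a ∈ w.toFinset.filter (· < b) := by
        simp only [Finset.mem_filter]
        exact ⟨List.mem_toFinset.2 ha, hab⟩
      have := hsub h1
      simp at this
    have := Finset.card_lt_card hss
    omega
  · intro h
    by_contra hab
    push_neg at hab
    have : w.toFinset.filter (· < b) ⊆ w.toFinset.filter (· < a) :=
      Finset.monotone_filter_right _ (fun x _ hx => lt_of_lt_of_le hx hab)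
    have := Finset.card_le_card this
    omega

lemma pack_map (x : List ℕ) (g : ℕ → ℕ)
    (hg : ∀ a ∈ x, ∀ b ∈ x, (a < b ↔ g a < g b)) :
    pack (x.map g) = pack x := by
  have hinj : Set.InjOn g x.toFinset := by
    intro a ha b hb hab
    simp only [Finset.coe_sort_coe, List.coe_toFinset, Set.mem_setOf_eq] at ha hb
    by_contra hne
    rcases lt_or_gt_of_ne hne with h | h
    · exact absurd hab (ne_of_lt ((hg a ha b hb).1 h))
    · exact absurd hab (ne_of_gt ((hg b hb a ha).1 h))
  have htf : (x.map g).toFinset = x.toFinset.image g := by ext c; simp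
  unfold pack
  rw [List.map_map]
  apply List.map_congr_left
  intro a ha
  simp only [Function.comp_apply]
  rw [rank_eq, rank_eq, htf, Finset.filter_image]
  have hfe : x.toFinset.filter (fun b => g b < g a) = x.toFinset.filter (· < a) := by
    apply Finset.filter_congr
    intro b hb
    simp only [List.mem_toFinset] at hb
    simp [(hg b hb a ha).symm]
  rw [hfe]
  rw [Finset.card_image_of_injOn (hinj.mono (by intro b hb; simp only [Finset.coe_filter, Set.mem_setOf_eq] at hb; simpa using hb.1))]

lemma length_pack (x : List ℕ) : (pack x).length = x.length := List.length_map _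

lemma pack_pack (x : List ℕ) : pack (pack x) = pack x :=
  pack_map x (rank x) (fun a ha b _ => rank_lt_rank x ha)

lemma pack_take (x : List ℕ) (m : ℕ) : pack ((pack x).take m) = pack (x.take m) := by
  have h1 : (pack x).take m = (x.take m).map (rank x) := List.map_take.symm
  rw [h1]
  exact pack_map (x.take m) (rank x)
    (fun a ha b _ => rank_lt_rank x (List.mem_of_mem_take ha))

lemma pack_drop (x : List ℕ) (m : ℕ) : pack ((pack x).drop m) = pack (x.drop m) := by
  have h1 : (pack x).drop m = (x.drop m).map (rank x) := List.map_drop.symm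
  rw [h1]
  exact pack_map (x.drop m) (rank x)
    (fun a ha b _ => rank_lt_rank x (List.mem_of_mem_drop ha))

lemma rank_le_length (x : List ℕ) {a : ℕ} (ha : a ∈ x) : rank x a ≤ x.length := by
  rw [rank_eq]
  have h1 : x.toFinset.filter (· < a) ⊂ x.toFinset := by
    refine ⟨Finset.filter_subset _ _, fun hsub => ?_⟩
    have := hsub (List.mem_toFinset.2 ha)
    simp at this
  have h2 := Finset.card_lt_card h1
  have h3 := x.toFinset_card_le
  omega

/-- For a packed word `u`, the element `M_u` of `MonoidAlgebra ℚ (FreeMonoid (Fin N))`: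
the sum of all words `w` over the alphabet `Fin N` (identified with `{1 < 2 < … < N}`)
whose packed word is `u`. -/
noncomputable def Mword (N : ℕ) (u : List ℕ) : MonoidAlgebra ℚ (FreeMonoid (Fin N)) :=
  ∑ f : Fin u.length → Fin N,
    if pack ((List.ofFn f).map (fun i => (i : ℕ) + 1)) = u
    then MonoidAlgebra.single (FreeMonoid.ofList (List.ofFn f)) (1 : ℚ) else 0

/-- The (finite) set of all packed words of length `n`; a packed word of length `n`
has all its letters in `{1, …, n}`. -/
noncomputable def packedWords (n : ℕ) : Finset (List ℕ) :=
  ((Finset.univ : Finset (Fin n → Fin (n + 1))).image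
    (fun f => (List.ofFn f).map (fun i : Fin (n + 1) => (i : ℕ)))).filter (fun w => pack w = w)

lemma mem_pack_lt (x : List ℕ) {y : ℕ} (hy : y ∈ pack x) : y < x.length + 1 := by
  simp only [pack, List.mem_map] at hy
  obtain ⟨a, ha, rfl⟩ := hy
  have := rank_le_length x ha
  omega

lemma pack_mem_packedWords (x : List ℕ) : pack x ∈ packedWords x.length := by
  rw [packedWords, Finset.mem_filter]
  constructor
  · rw [Finset.mem_image]
    refine ⟨fun i => ⟨(pack x)[(i : ℕ)]'(by rw [length_pack]; exact i.2),
      mem_pack_lt x (List.getElem_mem _)⟩, Finset.mem_univ _, ?_⟩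
    rw [List.map_ofFn]
    apply List.ext_getElem
    · simp [length_pack]
    · intro i h1 h2
      simp
  · simp [pack_pack]

lemma length_mem_packedWords {n : ℕ} {w : List ℕ} (hw : w ∈ packedWords n) :
    w.length = n := by
  rw [packedWords, Finset.mem_filter, Finset.mem_image] at hw
  obtain ⟨⟨f, _, rfl⟩, _⟩ := hw
  simp

lemma Mword_of_length (N n : ℕ) (w : List ℕ) (h : w.length = n) :
    Mword N w = ∑ f : Fin n → Fin N,
      if pack ((List.ofFn f).map (fun i => (i : ℕ) + 1)) = w
      then MonoidAlgebra.single (FreeMonoid.ofList (List.ofFn f)) (1 : ℚ) else 0 := by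
  subst h; rfl

lemma coe_map_eq {N k : ℕ} (f : Fin k → Fin N) :
    List.map (fun i : ℕ => i + 1) ((List.ofFn f) >>= (fun a => pure (Fin.val a))) =
      (List.ofFn f).map (fun i : Fin N => (i : ℕ) + 1) := by
  show List.map _ ((List.ofFn f).flatMap (pure ∘ Fin.val)) = _
  rw [List.flatMap_pure_eq_map, List.map_map]
  rfl

lemma cond_iff (N m n : ℕ) (u v : List ℕ) (h : Fin (m + n) → Fin N) :
    (pack ((List.ofFn h).map (fun i : Fin N => (i : ℕ) + 1)) ∈
      (packedWords (m + n)).filter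
        (fun w => pack (w.take m) = u ∧ pack (w.drop m) = v)) ↔
    (pack ((List.ofFn (fun i => h (Fin.castAdd n i))).map (fun i : Fin N => (i : ℕ) + 1)) = u ∧
     pack ((List.ofFn (fun j => h (Fin.natAdd m j))).map (fun i : Fin N => (i : ℕ) + 1)) = v) := by
  set s : Fin N → ℕ := fun i => (i : ℕ) + 1 with hs
  have hsplit : (List.ofFn h).map s =
      (List.ofFn (fun i => h (Fin.castAdd n i))).map s ++
      (List.ofFn (fun j => h (Fin.natAdd m j))).map s := by
    rw [List.ofFn_add, List.map_append]
    rfl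
  have hlen : ((List.ofFn h).map s).length = m + n := by simp
  have h1 := pack_mem_packedWords ((List.ofFn h).map s)
  rw [hlen] at h1
  have ht : ((List.ofFn h).map s).take m = (List.ofFn (fun i => h (Fin.castAdd n i))).map s := by
    rw [hsplit, List.take_left' (by simp)]
  have hd : ((List.ofFn h).map s).drop m = (List.ofFn (fun j => h (Fin.natAdd m j))).map s := by
    rw [hsplit, List.drop_left' (by simp)]
  rw [Finset.mem_filter, pack_take, pack_drop, ht, hd]
  exact ⟨fun h2 => h2.2, fun h2 => ⟨h1, h2⟩⟩

def splitEquiv (N m n : ℕ) : (Fin (m + n) → Fin N) ≃ (Fin m → Fin N) × (Fin n → Fin N) where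
  toFun h := (fun i => h (Fin.castAdd n i), fun j => h (Fin.natAdd m j))
  invFun p := Fin.append p.1 p.2
  left_inv h := by
    funext x
    refine Fin.addCases (fun i => ?_) (fun j => ?_) x
    · exact Fin.append_left _ _ i
    · exact Fin.append_right _ _ j
  right_inv p := by
    refine Prod.ext ?_ ?_
    · funext i; exact Fin.append_left _ _ i
    · funext j; exact Fin.append_right _ _ j

theorem Mword_mul (N : ℕ) (hN : 1 ≤ N) (u v : List ℕ) (hu : pack u = u) (hv : pack v = v) :
    Mword N u * Mword N v =
      ∑ w ∈ (packedWords (u.length + v.length)).filter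
        (fun w => pack (w.take u.length) = u ∧ pack (w.drop u.length) = v),
        Mword N w := by
  classical
  set m := u.length with hm
  set n := v.length with hn
  set S := (packedWords (m + n)).filter
    (fun w => pack (w.take m) = u ∧ pack (w.drop m) = v) with hS
  have hRHS : ∑ w ∈ S, Mword N w =
      ∑ h : Fin (m + n) → Fin N,
        if pack ((List.ofFn h).map (fun i : Fin N => (i : ℕ) + 1)) ∈ S
        then MonoidAlgebra.single (FreeMonoid.ofList (List.ofFn h)) (1 : ℚ) else 0 := by
    rw [Finset.sum_congr rfl (fun w hw => Mword_of_length N (m + n) w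
      (length_mem_packedWords (Finset.mem_of_mem_filter _ hw)))]
    rw [Finset.sum_comm]
    simp only [coe_map_eq]
    exact Finset.sum_congr rfl (fun h _ => Finset.sum_ite_eq S _ _)
  rw [hRHS]
  rw [Mword, Mword, Finset.sum_mul_sum]
  simp only [coe_map_eq]
  have main : ∀ h : Fin (m + n) → Fin N,
      (if pack ((List.ofFn h).map (fun i : Fin N => (i : ℕ) + 1)) ∈ S
        then MonoidAlgebra.single (FreeMonoid.ofList (List.ofFn h)) (1 : ℚ) else 0) =
      (if pack ((List.ofFn ((splitEquiv N m n) h).1).map (fun i : Fin N => (i : ℕ) + 1)) = u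
        then MonoidAlgebra.single (FreeMonoid.ofList (List.ofFn ((splitEquiv N m n) h).1)) (1 : ℚ) else 0) *
      (if pack ((List.ofFn ((splitEquiv N m n) h).2).map (fun i : Fin N => (i : ℕ) + 1)) = v
        then MonoidAlgebra.single (FreeMonoid.ofList (List.ofFn ((splitEquiv N m n) h).2)) (1 : ℚ) else 0) := by
    intro h
    show (if pack ((List.ofFn h).map (fun i : Fin N => (i : ℕ) + 1)) ∈ S
        then MonoidAlgebra.single (FreeMonoid.ofList (List.ofFn h)) (1 : ℚ) else 0) =
      (if pack ((List.ofFn (fun i => h (Fin.castAdd n i))).map (fun i : Fin N => (i : ℕ) + 1)) = u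
        then MonoidAlgebra.single (FreeMonoid.ofList (List.ofFn (fun i => h (Fin.castAdd n i)))) (1 : ℚ) else 0) *
      (if pack ((List.ofFn (fun j => h (Fin.natAdd m j))).map (fun i : Fin N => (i : ℕ) + 1)) = v
        then MonoidAlgebra.single (FreeMonoid.ofList (List.ofFn (fun j => h (Fin.natAdd m j)))) (1 : ℚ) else 0)
    rw [ite_zero_mul_ite_zero, MonoidAlgebra.single_mul_single, one_mul]
    have hcond := cond_iff N m n u v h
    rw [← hS] at hcond
    have hlist : FreeMonoid.ofList (List.ofFn h) =
        FreeMonoid.ofList (List.ofFn fun i => h (Fin.castAdd n i)) *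
        FreeMonoid.ofList (List.ofFn fun j => h (Fin.natAdd m j)) := by
      rw [List.ofFn_add]
      rfl
    exact if_congr hcond (by rw [hlist]) rfl
  rw [Fintype.sum_equiv (splitEquiv N m n) _
    (fun p : (Fin m → Fin N) × (Fin n → Fin N) =>
      (if pack ((List.ofFn p.1).map (fun i : Fin N => (i : ℕ) + 1)) = u
        then MonoidAlgebra.single (FreeMonoid.ofList (List.ofFn p.1)) (1 : ℚ) else 0) *
      (if pack ((List.ofFn p.2).map (fun i : Fin N => (i : ℕ) + 1)) = v
        then MonoidAlgebra.single (FreeMonoid.ofList (List.ofFn p.2)) (1 : ℚ) else 0)) main,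
    Fintype.sum_prod_type]
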